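/- Let k ∈ ℝ, let β > 0, and set A = Γ(β)/Γ(β+1/2). The function y : [0,∞) → ℝ defined by y(x) = (1/A)·Σ_{n=0}^∞ (k^n / ((n + 1/2)·n!))·x^(n+1/2) (the series converges for every x ≥ 0) satisfies y(0) = 0 and, for every x > 0, solves the GFD differential equation of order 1/2: A·x^(1/2)·y′(x) = e^{kx}. -/

import Mathlib

open Real

theorem gfd_ode_exp (β k : ℝ) (hβ : 0 < β) (A : ℝ)
    (hA : A = Real.Gamma β / Real.Gamma (β + 1 / 2)) (y : ℝ → ℝ)
    (hy : ∀ x : ℝ, y x =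
      (1 / A) * ∑' n : ℕ,
        k ^ n / (((n : ℝ) + 1 / 2) * (Nat.factorial n : ℝ)) * x ^ ((n : ℝ) + 1 / 2)) :
    (∀ x : ℝ, 0 ≤ x →
      Summable (fun n : ℕ =>
        k ^ n / (((n : ℝ) + 1 / 2) * (Nat.factorial n : ℝ)) * x ^ ((n : ℝ) + 1 / 2))) ∧
    y 0 = 0 ∧
    ∀ x : ℝ, 0 < x → A * x ^ ((1 : ℝ) / 2) * deriv y x = Real.exp (k * x) := by
  have hA0 : A ≠ 0 := by
    rw [hA]
    have h1 : 0 < Real.Gamma β := Real.Gamma_pos_of_pos hβ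
    have h2 : 0 < Real.Gamma (β + 1 / 2) := Real.Gamma_pos_of_pos (by linarith)
    positivity
  set f : ℕ → ℝ → ℝ := fun n x =>
    k ^ n / (((n : ℝ) + 1 / 2) * (Nat.factorial n : ℝ)) * x ^ ((n : ℝ) + 1 / 2) with hfdef
  -- summability for every real x
  have hsum : ∀ x : ℝ, Summable fun n => f n x := by
    intro x
    apply Summable.of_norm_bounded
      (g := fun n => 2 * |x| ^ ((1 : ℝ) / 2) * ((|k| * |x|) ^ n / (Nat.factorial n : ℝ)))
      ((Real.summable_pow_div_factorial (|k| * |x|)).mul_left _)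
    intro n
    have hfact : (0 : ℝ) < (Nat.factorial n : ℝ) := by positivity
    have hn2 : (0 : ℝ) < (n : ℝ) + 1 / 2 := by positivity
    have habs : ‖f n x‖ ≤ |k| ^ n / (((n : ℝ) + 1 / 2) * (Nat.factorial n : ℝ))
        * |x| ^ ((n : ℝ) + 1 / 2) := by
      simp only [hfdef, Real.norm_eq_abs, abs_mul, abs_div, abs_pow]
      rw [abs_of_pos hn2, abs_of_pos hfact]
      exact mul_le_mul_of_nonneg_left (Real.abs_rpow_le_abs_rpow x _) (by positivity)
    have hx2 : |x| ^ ((n : ℝ) + 1 / 2) = |x| ^ (n : ℕ) * |x| ^ ((1 : ℝ) / 2) := by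
      rw [← Real.rpow_natCast |x| n, ← Real.rpow_add' (abs_nonneg x) (by positivity)]
    have hdiv : |k| ^ n / (((n : ℝ) + 1 / 2) * (Nat.factorial n : ℝ))
        ≤ 2 * (|k| ^ n / (Nat.factorial n : ℝ)) := by
      rw [div_le_iff₀ (by positivity)]
      have h12 : (1 : ℝ) / 2 ≤ (n : ℝ) + 1 / 2 := by
        have : (0 : ℝ) ≤ n := Nat.cast_nonneg n
        linarith
      have hk : (0 : ℝ) ≤ |k| ^ n := by positivity
      have : |k| ^ n * 1 ≤ |k| ^ n * (2 * ((n : ℝ) + 1 / 2)) := by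
        apply mul_le_mul_of_nonneg_left _ hk
        linarith
      calc |k| ^ n = |k| ^ n * 1 := by ring
        _ ≤ |k| ^ n * (2 * ((n : ℝ) + 1 / 2)) := this
        _ = 2 * (|k| ^ n / ↑n.factorial) * (((n : ℝ) + 1 / 2) * ↑n.factorial) := by
            field_simp
    calc ‖f n x‖ ≤ |k| ^ n / (((n : ℝ) + 1 / 2) * ↑n.factorial) * |x| ^ ((n : ℝ) + 1 / 2) := habs
      _ ≤ 2 * (|k| ^ n / ↑n.factorial) * (|x| ^ (n : ℕ) * |x| ^ ((1 : ℝ) / 2)) := by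
          rw [hx2]; exact mul_le_mul_of_nonneg_right hdiv (by positivity)
      _ = 2 * |x| ^ ((1 : ℝ) / 2) * ((|k| * |x|) ^ n / ↑n.factorial) := by
          rw [mul_pow]; field_simp
  refine ⟨fun x _ => hsum x, ?_, ?_⟩
  · rw [hy 0]
    have : ∀ n : ℕ, f n 0 = 0 := by
      intro n
      simp only [hfdef]
      rw [Real.zero_rpow (by positivity)]
      ring
    simp only [hfdef] at this ⊢
    rw [tsum_congr this]
    simp
  · intro x hx
    -- the shifted derivative series
    set d : ℕ → ℝ → ℝ := fun m t => k ^ (m + 1) / (Nat.factorial (m + 1) : ℝ)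
        * t ^ ((m : ℝ) + 1 / 2) with hddef
    set R : ℝ := x + 1 with hR
    have hxR : x < R := by rw [hR]; linarith
    have hR0 : (0 : ℝ) < R := by linarith
    have hxs : x ∈ Set.Ioo (0 : ℝ) R := ⟨hx, hxR⟩
    -- summable bound for derivatives
    have hu : Summable fun m : ℕ => |k| ^ (m + 1) / (Nat.factorial (m + 1) : ℝ)
        * R ^ ((m : ℝ) + 1 / 2) := by
      refine Summable.of_nonneg_of_le (fun m => by positivity) (fun m => ?_)
        ((Real.summable_pow_div_factorial (|k| * R)).mul_left (|k| * R ^ ((1:ℝ)/2)))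
      · have h1 : R ^ ((m : ℝ) + 1 / 2) = R ^ (m : ℕ) * R ^ ((1 : ℝ) / 2) := by
          rw [← Real.rpow_natCast R m, ← Real.rpow_add' hR0.le (by positivity)]
        have h2 : (Nat.factorial m : ℝ) ≤ (Nat.factorial (m + 1) : ℝ) := by
          exact_mod_cast Nat.factorial_le (Nat.le_succ m)
        rw [h1]
        calc |k| ^ (m+1) / ((Nat.factorial (m+1)) : ℝ) * (R ^ m * R ^ ((1:ℝ)/2))
            ≤ |k| ^ (m+1) / ((Nat.factorial m) : ℝ) * (R ^ m * R ^ ((1:ℝ)/2)) := by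
              gcongr
          _ = |k| * R ^ ((1:ℝ)/2) * ((|k| * R) ^ m / (Nat.factorial m : ℝ)) := by
              rw [mul_pow, pow_succ]
              field_simp
    -- term-by-term differentiation on Ioo 0 R
    have hder : HasDerivAt (fun t => ∑' m : ℕ, f (m + 1) t) (∑' m : ℕ, d m x) x := by
      apply hasDerivAt_tsum_of_isPreconnected hu isOpen_Ioo
        (convex_Ioo (0:ℝ) R).isPreconnected
        (g' := d) (g := fun m t => f (m + 1) t) ?_ ?_ hxs ?_ hxs
      · intro m t ht
        have hp1 : (1 : ℝ) ≤ ((m + 1 : ℕ) : ℝ) + 1 / 2 := by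
          push_cast; linarith [Nat.cast_nonneg (α := ℝ) m]
        have := (Real.hasDerivAt_rpow_const
          (x := t) (p := ((m + 1 : ℕ) : ℝ) + 1 / 2) (Or.inr hp1)).const_mul
          (k ^ (m + 1) / ((((m + 1 : ℕ) : ℝ) + 1 / 2) * (Nat.factorial (m + 1) : ℝ)))
        refine this.congr_deriv (Eq.symm ?_)
        have hm2 : (((m + 1 : ℕ) : ℝ) + 1 / 2) ≠ 0 := by push_cast; positivity
        have hfm : ((Nat.factorial (m + 1) : ℝ)) ≠ 0 := by positivity
        simp only [hddef]
        rw [show ((m + 1 : ℕ) : ℝ) + 1 / 2 - 1 = (m : ℝ) + 1 / 2 by push_cast; ring]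
        field_simp
      · intro m t ht
        simp only [hddef, Real.norm_eq_abs, abs_mul, abs_div, abs_pow]
        have ht0 : 0 < t := ht.1
        have htR : t ≤ R := ht.2.le
        rw [abs_of_pos (show (0:ℝ) < ((Nat.factorial (m+1)) : ℝ) by positivity),
            abs_of_pos (Real.rpow_pos_of_pos ht0 _)]
        exact mul_le_mul_of_nonneg_left (Real.rpow_le_rpow ht0.le htR (by positivity))
          (by positivity)
      · exact (hsum x).comp_injective (add_left_injective 1)
    -- derivative of the first term
    have hder0 : HasDerivAt (f 0) (x ^ (-(1 : ℝ) / 2)) x := by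
      have := (Real.hasDerivAt_rpow_const (x := x) (p := ((0 : ℕ) : ℝ) + 1 / 2)
        (Or.inl hx.ne')).const_mul (k ^ 0 / ((((0 : ℕ) : ℝ) + 1 / 2) * (Nat.factorial 0 : ℝ)))
      refine this.congr_deriv (Eq.symm ?_)
      norm_num
      ring
    -- rewrite y
    have hyy : y = fun t => (1 / A) * (f 0 t + ∑' m : ℕ, f (m + 1) t) := by
      funext t
      rw [hy t, Summable.tsum_eq_zero_add (hsum t)]
    have hdy : HasDerivAt y ((1 / A) * (x ^ (-(1 : ℝ) / 2) + ∑' m : ℕ, d m x)) x := by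
      rw [hyy]
      exact ((hder0.add hder).const_mul (1 / A))
    rw [hdy.deriv]
    -- final computation
    have hxhalf : (0 : ℝ) < x ^ ((1 : ℝ) / 2) := Real.rpow_pos_of_pos hx _
    have hmain : x ^ ((1 : ℝ) / 2) * (x ^ (-(1 : ℝ) / 2) + ∑' m : ℕ, d m x)
        = Real.exp (k * x) := by
      have h1 : x ^ ((1 : ℝ) / 2) * x ^ (-(1 : ℝ) / 2) = 1 := by
        rw [← Real.rpow_add hx]; norm_num
      have h2 : x ^ ((1 : ℝ) / 2) * ∑' m : ℕ, d m x
          = ∑' m : ℕ, (k * x) ^ (m + 1) / (Nat.factorial (m + 1) : ℝ) := by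
        rw [← tsum_mul_left]
        apply tsum_congr
        intro m
        simp only [hddef]
        have : x ^ ((1 : ℝ) / 2) * x ^ ((m : ℝ) + 1 / 2) = x ^ (m + 1 : ℕ) := by
          rw [← Real.rpow_add hx, ← Real.rpow_natCast x (m + 1)]
          push_cast; ring_nf
        rw [mul_pow]
        field_simp
        rw [← this]
        ring
      rw [mul_add, h1, h2]
      have hexp : Real.exp (k * x) = ∑' n : ℕ, (k * x) ^ n / (Nat.factorial n : ℝ) := by
        rw [Real.exp_eq_exp_ℝ, NormedSpace.exp_eq_tsum_div]
      rw [hexp, Summable.tsum_eq_zero_add (Real.summable_pow_div_factorial (k * x))]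
      norm_num
    calc A * x ^ ((1:ℝ)/2) * (1 / A * (x ^ (-(1:ℝ)/2) + ∑' m : ℕ, d m x))
        = (A / A) * (x ^ ((1:ℝ)/2) * (x ^ (-(1:ℝ)/2) + ∑' m : ℕ, d m x)) := by ring
      _ = Real.exp (k * x) := by rw [div_self hA0, one_mul, hmain]
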